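/- For a field $K$ (or ring $\mathbb{Q}$), positive integers $a, b$ and scalars $\alpha, \beta, \gamma$, the determinant of the $(a+b)\times(a+b)$ block matrix $\begin{pmatrix}\alpha I_a + \beta J_a & \gamma J \\ \gamma J & \alpha I_b + \beta J_b\end{pmatrix}$ equals $\alpha^{a+b-2}\left(\alpha^2 + (a+b)\alpha\beta + ab\beta^2 - ab\gamma^2\right)$. -/
import Mathlib

open Matrix

/-- The all-ones matrix. -/
def allOnes {R : Type*} [One R] {m n : Type*} : Matrix m n R :=
  Matrix.of fun _ _ => 1

lemma det_sum_unit {R : Type*} [CommRing R] (M : Matrix (Fin 1 ⊕ Fin 1) (Fin 1 ⊕ Fin 1) R) :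
    M.det = M (.inl 0) (.inl 0) * M (.inr 0) (.inr 0) -
      M (.inl 0) (.inr 0) * M (.inr 0) (.inl 0) := by
  let e : Fin 2 ≃ (Fin 1 ⊕ Fin 1) :=
    ⟨![Sum.inl 0, Sum.inr 0], Sum.elim (fun _ => 0) (fun _ => 1), by decide, by decide⟩
  rw [← Matrix.det_submatrix_equiv_self e, Matrix.det_fin_two]
  simp [e, Matrix.submatrix_apply]

theorem det_two_block_circulant (K : Type*) [Field K] (a b : ℕ) (ha : 1 ≤ a) (hb : 1 ≤ b)
    (α β γ : K) :
    (Matrix.fromBlocks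
        (α • (1 : Matrix (Fin a) (Fin a) K) + β • allOnes) (γ • allOnes)
        (γ • allOnes) (α • (1 : Matrix (Fin b) (Fin b) K) + β • allOnes)).det =
      α ^ (a + b - 2) *
        (α ^ 2 + (a + b : K) * α * β + (a : K) * b * β ^ 2 - (a : K) * b * γ ^ 2) := by
  set M := Matrix.fromBlocks
        (α • (1 : Matrix (Fin a) (Fin a) K) + β • allOnes) (γ • allOnes)
        (γ • allOnes) (α • (1 : Matrix (Fin b) (Fin b) K) + β • allOnes) with hMdef
  rcases eq_or_ne α 0 with hα | hα
  · subst hα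
    rcases Nat.lt_or_ge a 2 with ha2 | ha2
    · rcases Nat.lt_or_ge b 2 with hb2 | hb2
      · -- a = b = 1
        have ha1 : a = 1 := by omega
        have hb1 : b = 1 := by omega
        subst ha1; subst hb1
        rw [det_sum_unit]
        simp [hMdef, allOnes, Matrix.one_apply]
        ring
      · -- b ≥ 2 : two equal rows
        have : M.det = 0 := by
          apply Matrix.det_zero_of_row_eq
            (i := Sum.inr (⟨0, by omega⟩ : Fin b)) (j := Sum.inr ⟨1, by omega⟩)
          · simp [Fin.ext_iff]
          · ext j
            rcases j with j | j <;>
              simp [hMdef, allOnes, Matrix.one_apply, Fin.ext_iff]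
        rw [this, zero_pow (by omega : a + b - 2 ≠ 0)]
        ring
    · have : M.det = 0 := by
        apply Matrix.det_zero_of_row_eq
          (i := Sum.inl (⟨0, by omega⟩ : Fin a)) (j := Sum.inl ⟨1, by omega⟩)
        · simp [Fin.ext_iff]
        · ext j
          rcases j with j | j <;>
            simp [hMdef, allOnes, Matrix.one_apply, Fin.ext_iff]
      rw [this, zero_pow (by omega : a + b - 2 ≠ 0)]
      ring
  · -- α ≠ 0
    set U : Matrix (Fin a ⊕ Fin b) (Fin 1 ⊕ Fin 1) K :=
      Matrix.fromBlocks allOnes 0 0 allOnes with hU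
    set V : Matrix (Fin 1 ⊕ Fin 1) (Fin a ⊕ Fin b) K :=
      Matrix.fromBlocks ((β / α) • allOnes) ((γ / α) • allOnes)
        ((γ / α) • allOnes) ((β / α) • allOnes) with hV
    have hM : M = α • (1 + U * V) := by
      ext i j
      rcases i with i | i <;> rcases j with j | j <;>
        simp [hMdef, hU, hV, Matrix.mul_apply, Fintype.sum_sum_type, allOnes,
          Matrix.one_apply, mul_add, mul_div_cancel₀ _ hα] <;>
        split <;> simp_all <;> ring
    obtain ⟨n, hn⟩ : ∃ n, a + b = n + 2 := ⟨a + b - 2, by omega⟩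
    rw [hM, Matrix.det_smul, Matrix.det_one_add_mul_comm, det_sum_unit,
      show a + b - 2 = n by omega]
    have hcard : Fintype.card (Fin a ⊕ Fin b) = n + 2 := by simp [hn]
    rw [hcard]
    simp only [hU, hV, Matrix.add_apply, Matrix.mul_apply, Fintype.sum_sum_type,
      Matrix.fromBlocks_apply₁₁, Matrix.fromBlocks_apply₁₂, Matrix.fromBlocks_apply₂₁,
      Matrix.fromBlocks_apply₂₂, Matrix.one_apply, allOnes, Matrix.of_apply,
      Matrix.smul_apply, Matrix.zero_apply, smul_eq_mul, mul_one, mul_zero, zero_mul,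
      add_zero, zero_add, Finset.sum_const, Finset.card_univ, Fintype.card_fin,
      nsmul_eq_mul, if_true, reduceIte, Sum.inl.injEq, Sum.inr.injEq, reduceCtorEq, if_false]
    have hab : ((a : K) + b) = ((a + b : ℕ) : K) := by push_cast; ring
    field_simp
    ring
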